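/- arXiv:1503.02654 — 2 statements merged into one kernel-verified Lean document; each statement's English description precedes it below -/
import Mathlib

section
/- Let P be a placement on a rooted tree, u an internal node with unfilled child v and child w satisfying r_v < r_w − 1 and r_w ≥ 1. Let q_w ∈ P be a leaf under w and q_v ∉ P an unoccupied leaf under v, and set P* = (P − {q_w}) ∪ {q_v}. Then f⃗(P*) <_L f⃗(P). -/
open scoped Classical

/-- A rooted tree on a finite vertex set `V`, given by a parent function under which
every vertex reaches the root. -/
structure FailTree (V : Type*) [Fintype V] where
  root : V
  parent : V → V
  parent_root : parent root = root
  reaches_root : ∀ v, ∃ n : ℕ, parent^[n] v = root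

namespace FailTree

variable {V : Type*} [Fintype V]

/-- `T.Desc u v` : `u` is a descendant of `v` (every node is a descendant of itself). -/
def Desc (T : FailTree V) (u v : V) : Prop := ∃ n : ℕ, T.parent^[n] u = v

/-- A leaf is a node with no children. -/
def IsLeaf (T : FailTree V) (v : V) : Prop := ∀ u, T.parent u = v → u = v

noncomputable def leaves (T : FailTree V) : Finset V :=
  Finset.univ.filter fun v => T.IsLeaf v

/-- The failure number `f(v, P)` of node `v` under placement `P`:
the number of members of `P` that are descendants of `v`. -/
noncomputable def fnum (T : FailTree V) (v : V) (P : Finset V) : ℕ :=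
  (P.filter fun p => T.Desc p v).card

/-- The failure aggregate restricted to a set `S` of nodes: entry `i` counts the
nodes of `S` having failure number `i`. -/
noncomputable def faggOn (T : FailTree V) (S P : Finset V) : ℕ → ℕ :=
  fun i => (S.filter fun v => T.fnum v P = i).card

/-- The failure aggregate `f⃗(P)`: entry `i` counts the nodes with failure number `i`. -/
noncomputable def fagg (T : FailTree V) (P : Finset V) : ℕ → ℕ :=
  T.faggOn Finset.univ P

/-- The node set of the path from the root to `x`, i.e. all ancestors of `x`. -/
noncomputable def pathTo (T : FailTree V) (x : V) : Finset V :=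
  Finset.univ.filter fun v => T.Desc x v

/-- The number of leaves in the subtree rooted at `v`. -/
noncomputable def leafCount (T : FailTree V) (v : V) : ℕ :=
  (T.leaves.filter fun l => T.Desc l v).card

end FailTree

/-- Strict lexicographic comparison of failure aggregates; entries with higher index
(higher failure number) are more significant. -/
def AggLt (p q : ℕ → ℕ) : Prop := ∃ m, p m < q m ∧ ∀ i, m < i → p i = q i

/-- Lexicographic comparison (non-strict) of failure aggregates. -/
def AggLe (p q : ℕ → ℕ) : Prop := p = q ∨ AggLt p q

namespace FailTree

variable {V : Type*} [Fintype V] (T : FailTree V)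

lemma desc_refl (x : V) : T.Desc x x := ⟨0, rfl⟩

lemma desc_trans {a b c : V} (h1 : T.Desc a b) (h2 : T.Desc b c) : T.Desc a c := by
  obtain ⟨m, rfl⟩ := h1
  obtain ⟨n, rfl⟩ := h2
  exact ⟨n + m, (Function.iterate_add_apply _ n m a)⟩

lemma desc_total {a x y : V} (hx : T.Desc a x) (hy : T.Desc a y) :
    T.Desc x y ∨ T.Desc y x := by
  obtain ⟨m, rfl⟩ := hx
  obtain ⟨n, rfl⟩ := hy
  rcases le_total m n with h | h
  · left
    refine ⟨n - m, ?_⟩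
    rw [← Function.iterate_add_apply]
    congr 1
    omega
  · right
    refine ⟨m - n, ?_⟩
    rw [← Function.iterate_add_apply]
    congr 1
    omega

lemma desc_antisymm {a b : V} (h1 : T.Desc a b) (h2 : T.Desc b a) : a = b := by
  obtain ⟨m, hm⟩ := h1
  obtain ⟨n, hn⟩ := h2
  rcases Nat.eq_zero_or_pos m with rfl | hmpos
  · simpa using hm
  have hcyc : T.parent^[n + m] a = a := by
    rw [Function.iterate_add_apply, hm, hn]
  obtain ⟨k, hk⟩ := T.reaches_root a
  have hcyck : T.parent^[(n + m) * k] a = a := by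
    rw [Function.iterate_mul, Function.iterate_fixed hcyc]
  have haroot : a = T.root := by
    rcases Nat.eq_zero_or_pos k with rfl | hkpos
    · simpa using hk
    have hle : k ≤ (n + m) * k := Nat.le_mul_of_pos_left k (by omega)
    have : T.parent^[(n + m) * k] a = T.root := by
      have : T.parent^[((n + m) * k - k) + k] a = T.parent^[(n + m) * k - k] T.root := by
        rw [Function.iterate_add_apply, hk]
      rw [show ((n + m) * k - k) + k = (n + m) * k by omega] at this
      rw [this, Function.iterate_fixed T.parent_root]
    rw [hcyck] at this
    exact this
  subst haroot
  rw [Function.iterate_fixed T.parent_root] at hm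
  exact hm

lemma desc_parent_cases {x y : V} (h : T.Desc x y) : x = y ∨ T.Desc (T.parent x) y := by
  obtain ⟨n, hn⟩ := h
  cases n with
  | zero => exact Or.inl hn
  | succ k =>
    right
    rw [Function.iterate_succ_apply] at hn
    exact ⟨k, hn⟩

lemma fnum_mono {x y : V} (h : T.Desc x y) (P : Finset V) : T.fnum x P ≤ T.fnum y P := by
  apply Finset.card_le_card
  intro p hp
  simp only [Finset.mem_filter] at *
  exact ⟨hp.1, T.desc_trans hp.2 h⟩

lemma fnum_swap (P : Finset V) {qv qw : V} (hqv : qv ∉ P) (hqw : qw ∈ P) (x : V) :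
    T.fnum x (insert qv (P.erase qw)) =
      T.fnum x P + (if T.Desc qv x then 1 else 0) - (if T.Desc qw x then 1 else 0) := by
  classical
  unfold fnum
  rw [Finset.filter_insert, Finset.filter_erase]
  have hqw1 : T.fnum x P = (P.filter fun p => T.Desc p x).card := rfl
  by_cases h1 : T.Desc qv x <;> by_cases h2 : T.Desc qw x <;>
    simp only [h1, h2, if_true, if_false]
  · have hmem : qw ∈ P.filter fun p => T.Desc p x := Finset.mem_filter.mpr ⟨hqw, h2⟩
    rw [Finset.card_insert_of_notMem (by
      intro hc
      exact hqv (Finset.mem_of_mem_filter _ (Finset.mem_of_mem_erase hc)))]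
    rw [Finset.card_erase_of_mem hmem]
    have : 1 ≤ (P.filter fun p => T.Desc p x).card := Finset.card_pos.mpr ⟨qw, hmem⟩
    omega
  · rw [Finset.card_insert_of_notMem (by
      intro hc
      exact hqv (Finset.mem_of_mem_filter _ (Finset.mem_of_mem_erase hc)))]
    rw [Finset.erase_eq_of_notMem (by
      intro hc
      exact h2 (Finset.mem_filter.mp hc).2)]
    omega
  · have hmem : qw ∈ P.filter fun p => T.Desc p x := Finset.mem_filter.mpr ⟨hqw, h2⟩
    rw [Finset.card_erase_of_mem hmem]
    omega
  · rw [Finset.erase_eq_of_notMem (by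
      intro hc
      exact h2 (Finset.mem_filter.mp hc).2)]
    omega

end FailTree

/-- The swap argument of Theorem 2: if `v` is an unfilled child of `u`, `w` a child of
`u` with `r_v < r_w - 1` and `r_w ≥ 1`, `q_w ∈ P` a leaf under `w` and `q_v ∉ P` a leaf
under `v`, then `P* = (P − {q_w}) ∪ {q_v}` has strictly smaller failure aggregate. -/
theorem swap_strictly_improves {V : Type*} [Fintype V] (T : FailTree V)
    (P : Finset V) (hP : P ⊆ T.leaves)
    (u v w qv qw : V)
    (hv : T.parent v = u) (hv' : v ≠ u) (hw : T.parent w = u) (hw' : w ≠ u) (hvw : v ≠ w)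
    (hunfilled : T.fnum v P < T.leafCount v)
    (hgap : T.fnum v P < T.fnum w P - 1) (hw1 : 1 ≤ T.fnum w P)
    (hqw : qw ∈ P) (hqwdesc : T.Desc qw w)
    (hqv : qv ∉ P) (hqvleaf : qv ∈ T.leaves) (hqvdesc : T.Desc qv v) :
    AggLt (T.fagg (insert qv (P.erase qw))) (T.fagg P) := by
  classical
  have hswap := T.fnum_swap P hqv hqw
  have hdescvu : T.Desc v u := ⟨1, by simpa using hv⟩
  have hdescwu : T.Desc w u := ⟨1, by simpa using hw⟩
  have hqvu : T.Desc qv u := T.desc_trans hqvdesc hdescvu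
  have hqwu : T.Desc qw u := T.desc_trans hqwdesc hdescwu
  have hA : ∀ x, T.Desc qv x → ¬ T.Desc qw x → T.Desc x v := by
    intro x h1 h2
    rcases T.desc_total h1 hqvdesc with h | h
    · exact h
    · rcases T.desc_parent_cases h with rfl | h'
      · exact T.desc_refl _
      · rw [hv] at h'
        exact absurd (T.desc_trans hqwu h') h2
  have hB : ∀ x, T.Desc qw x → ¬ T.Desc qv x → T.Desc x w := by
    intro x h1 h2
    rcases T.desc_total h1 hqwdesc with h | h
    · exact h
    · rcases T.desc_parent_cases h with rfl | h'
      · exact T.desc_refl _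
      · rw [hw] at h'
        exact absurd (T.desc_trans hqvu h') h2
  have hnqvw : ¬ T.Desc qv w := by
    intro h
    rcases T.desc_total hqvdesc h with h' | h'
    · rcases T.desc_parent_cases h' with rfl | h''
      · exact hvw rfl
      · rw [hv] at h''
        exact hw' (T.desc_antisymm hdescwu h'')
    · rcases T.desc_parent_cases h' with h0 | h''
      · exact hvw h0.symm
      · rw [hw] at h''
        exact hv' (T.desc_antisymm hdescvu h'')
  have hAle : ∀ x, T.Desc qv x → ¬ T.Desc qw x → T.fnum x P ≤ T.fnum v P :=
    fun x h1 h2 => T.fnum_mono (hA x h1 h2) P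
  have hBle : ∀ x, T.Desc qw x → ¬ T.Desc qv x → T.fnum x P ≤ T.fnum w P :=
    fun x h1 h2 => T.fnum_mono (hB x h1 h2) P
  have hBge : ∀ x, T.Desc qw x → 1 ≤ T.fnum x P := by
    intro x h
    exact Finset.card_pos.mpr ⟨qw, Finset.mem_filter.mpr ⟨hqw, h⟩⟩
  refine ⟨T.fnum w P, ?_, ?_⟩
  · simp only [FailTree.fagg, FailTree.faggOn]
    have hsub : (Finset.univ.filter fun x => T.fnum x (insert qv (P.erase qw)) = T.fnum w P)
        ⊆ (Finset.univ.filter fun x => T.fnum x P = T.fnum w P) := by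
      intro x hx
      simp only [Finset.mem_filter, Finset.mem_univ, true_and] at hx ⊢
      rw [hswap x] at hx
      by_cases h1 : T.Desc qv x <;> by_cases h2 : T.Desc qw x <;>
        simp only [h1, h2, if_true, if_false] at hx
      · have := hBge x h2
        omega
      · have := hAle x h1 h2
        omega
      · have := hBle x h2 h1
        have := hBge x h2
        omega
      · omega
    refine Finset.card_lt_card ((Finset.ssubset_iff_of_subset hsub).mpr ⟨w, ?_, ?_⟩)
    · simp
    · simp only [Finset.mem_filter, Finset.mem_univ, true_and]
      rw [hswap w]
      simp only [hnqvw, hqwdesc, if_true, if_false]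
      omega
  · intro i hi
    simp only [FailTree.fagg, FailTree.faggOn]
    congr 1
    apply Finset.filter_congr
    intro x _
    rw [hswap x]
    by_cases h1 : T.Desc qv x <;> by_cases h2 : T.Desc qw x <;>
      simp only [h1, h2, if_true, if_false]
    · constructor <;> intro h <;> omega
    · have := hAle x h1 h2
      constructor <;> intro h <;> omega
    · have := hBle x h2 h1
      have := hBge x h2
      constructor <;> intro h <;> omega
    · constructor <;> intro h <;> omega
end

section
/- Exchange stability under disjoint additions: let T be a rooted tree with root r, P ⊆ leaves, a, b leaves not in P, c the least common ancestor of a and b, and d the child of c on the path toward a. If f⃗(r⇝a,P) ≤_L f⃗(r⇝b,P) and X is a set of leaves disjoint from {a,b} with no leaf of X a descendant of d, then f⃗(P ∪ X ∪ {a}) ≤_L f⃗(P ∪ X ∪ {b}). -/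
open scoped Classical

/- ## Auxiliary material -/

namespace FailTree

variable {V : Type*} [Fintype V]

lemma desc_trans_s12 (T : FailTree V) {u v w : V} (h1 : T.Desc u v) (h2 : T.Desc v w) :
    T.Desc u w := by
  obtain ⟨n, hn⟩ := h1; obtain ⟨m, hm⟩ := h2
  exact ⟨m + n, by rw [Function.iterate_add_apply, hn, hm]⟩

lemma fnum_insert (T : FailTree V) (v a : V) (Q : Finset V) (haQ : a ∉ Q) :
    T.fnum v (insert a Q) = T.fnum v Q + (if T.Desc a v then 1 else 0) := by
  unfold fnum
  rw [Finset.filter_insert]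
  split_ifs with hv
  · rw [Finset.card_insert_of_notMem (fun hmem => haQ (Finset.mem_filter.mp hmem).1)]
  · simp

lemma faggOn_union (T : FailTree V) (S1 S2 P : Finset V) (hdisj : Disjoint S1 S2) (i : ℕ) :
    T.faggOn (S1 ∪ S2) P i = T.faggOn S1 P i + T.faggOn S2 P i := by
  unfold faggOn
  rw [Finset.filter_union,
    Finset.card_union_of_disjoint (Finset.disjoint_filter_filter hdisj)]

lemma faggOn_congr (T : FailTree V) (S P Q : Finset V)
    (h : ∀ v ∈ S, T.fnum v P = T.fnum v Q) :
    T.faggOn S P = T.faggOn S Q := by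
  funext i
  unfold faggOn
  exact congrArg Finset.card (Finset.filter_congr fun v hv => by simp [h v hv])

lemma fnum_mono_s12 (T : FailTree V) (v : V) {P Q : Finset V} (h : P ⊆ Q) :
    T.fnum v P ≤ T.fnum v Q :=
  Finset.card_le_card (Finset.filter_subset_filter _ h)

end FailTree

/-- Shift of an aggregate: everything moves up by one index. -/
def shiftAgg (p : ℕ → ℕ) : ℕ → ℕ
  | 0 => 0
  | (j+1) => p j

lemma faggOn_shift {V : Type*} [Fintype V] (T : FailTree V) (S P P' : Finset V)
    (hplus : ∀ v ∈ S, T.fnum v P' = T.fnum v P + 1) (i : ℕ) :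
    T.faggOn S P' i = shiftAgg (T.faggOn S P) i := by
  match i with
  | 0 =>
    simp only [shiftAgg, FailTree.faggOn]
    rw [Finset.card_eq_zero]
    exact Finset.filter_eq_empty_iff.mpr fun v hv => by rw [hplus v hv]; omega
  | (j+1) =>
    simp only [shiftAgg, FailTree.faggOn]
    congr 1
    exact Finset.filter_congr fun v hv => by rw [hplus v hv]; constructor <;> omega

lemma aggle_trans {p q r : ℕ → ℕ} (h1 : AggLe p q) (h2 : AggLe q r) : AggLe p r := by
  rcases h1 with rfl | ⟨m1, hm1, he1⟩
  · exact h2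
  rcases h2 with rfl | ⟨m2, hm2, he2⟩
  · exact Or.inr ⟨m1, hm1, he1⟩
  rcases le_or_gt m1 m2 with hle | hlt
  · refine Or.inr ⟨m2, ?_, fun i hi => (he1 i (by omega)).trans (he2 i hi)⟩
    rcases eq_or_lt_of_le hle with rfl | hlt'
    · omega
    · rw [he1 m2 hlt']; exact hm2
  · refine Or.inr ⟨m1, ?_, fun i hi => (he1 i hi).trans (he2 i (by omega))⟩
    rw [← he2 m1 hlt]; exact hm1

lemma aggle_add_right {p q s : ℕ → ℕ} (h : AggLe p q) :
    AggLe (fun i => p i + s i) (fun i => q i + s i) := by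
  rcases h with rfl | ⟨m, hm, he⟩
  · exact Or.inl rfl
  · refine Or.inr ⟨m, ?_, fun i hi => ?_⟩
    · show p m + s m < q m + s m
      omega
    · show p i + s i = q i + s i
      rw [he i hi]

lemma aggle_of_add_right {p q s : ℕ → ℕ}
    (h : AggLe (fun i => p i + s i) (fun i => q i + s i)) : AggLe p q := by
  rcases h with heq | ⟨m, hm, he⟩
  · left
    funext i
    have h' : p i + s i = q i + s i := congrFun heq i
    omega
  · right
    refine ⟨m, ?_, fun i hi => ?_⟩
    · have h' : p m + s m < q m + s m := hm
      omega
    · have h' : p i + s i = q i + s i := he i hi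
      omega

lemma aggle_shift {p q : ℕ → ℕ} (h : AggLe p q) :
    AggLe (fun i => shiftAgg p i + q i) (fun i => p i + shiftAgg q i) := by
  rcases h with rfl | ⟨m, hm, he⟩
  · exact Or.inl (funext fun i => by omega)
  · refine Or.inr ⟨m + 1, ?_, ?_⟩
    · simp only [shiftAgg]
      rw [he (m+1) (by omega)]
      omega
    · intro i hi
      match i, hi with
      | (j+1), hi =>
        simp only [shiftAgg]
        rw [he j (by omega), he (j+1) (by omega)]
        omega

lemma aggle_filter_mono {V : Type*} [Fintype V] (S : Finset V) (g h : V → ℕ)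
    (hgh : ∀ v ∈ S, g v ≤ h v) :
    AggLe (fun i => (S.filter fun v => g v = i).card)
          (fun i => (S.filter fun v => h v = i).card) := by
  classical
  set ag : ℕ → ℕ := fun i => (S.filter fun v => g v = i).card with hagdef
  set ah : ℕ → ℕ := fun i => (S.filter fun v => h v = i).card with hahdef
  by_cases hEq : ag = ah
  · exact Or.inl hEq
  right
  set M := S.sup h with hM
  have hhM : ∀ v ∈ S, h v ≤ M := fun v hv => Finset.le_sup hv
  have hgM : ∀ v ∈ S, g v ≤ M := fun v hv => le_trans (hgh v hv) (hhM v hv)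
  have hzg : ∀ i, M < i → ag i = 0 := by
    intro i hi
    rw [hagdef]
    simp only
    rw [Finset.card_eq_zero]
    exact Finset.filter_eq_empty_iff.mpr fun v hv => by have := hgM v hv; omega
  have hzh : ∀ i, M < i → ah i = 0 := by
    intro i hi
    rw [hahdef]
    simp only
    rw [Finset.card_eq_zero]
    exact Finset.filter_eq_empty_iff.mpr fun v hv => by have := hhM v hv; omega
  have hne : ((Finset.range (M+1)).filter fun i => ag i ≠ ah i).Nonempty := by
    obtain ⟨i, hi⟩ := Function.ne_iff.mp hEq
    refine ⟨i, Finset.mem_filter.mpr ⟨Finset.mem_range.mpr ?_, hi⟩⟩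
    by_contra hcon
    exact hi ((hzg i (by omega)).trans (hzh i (by omega)).symm)
  set m := ((Finset.range (M+1)).filter fun i => ag i ≠ ah i).max' hne with hmdef
  have hm_mem := Finset.max'_mem _ hne
  have hmne : ag m ≠ ah m := (Finset.mem_filter.mp hm_mem).2
  have hmM : m ≤ M := by
    have := Finset.mem_range.mp (Finset.mem_filter.mp hm_mem).1; omega
  have habove : ∀ i, m < i → ag i = ah i := by
    intro i hi
    by_contra hcon
    by_cases hiM : i ≤ M
    · have hmem : i ∈ (Finset.range (M+1)).filter fun i => ag i ≠ ah i :=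
        Finset.mem_filter.mpr ⟨Finset.mem_range.mpr (by omega), hcon⟩
      have := Finset.le_max' _ i hmem
      omega
    · exact hcon ((hzg i (by omega)).trans (hzh i (by omega)).symm)
  have key : ∀ (f : V → ℕ), (∀ v ∈ S, f v ≤ M) →
      (S.filter fun v => m ≤ f v).card
        = ∑ j ∈ Finset.Icc m M, (S.filter fun v => f v = j).card := by
    intro f hf
    rw [Finset.card_eq_sum_card_fiberwise
      (f := f) (t := Finset.Icc m M)
      (fun v hv => by
        simp only [Finset.mem_coe, Finset.mem_filter] at hv
        exact Finset.mem_Icc.mpr ⟨hv.2, hf v hv.1⟩)]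
    apply Finset.sum_congr rfl
    intro j hj
    congr 1
    ext v
    simp only [Finset.mem_filter, Finset.mem_Icc] at *
    constructor
    · rintro ⟨⟨h1, _⟩, h3⟩; exact ⟨h1, h3⟩
    · rintro ⟨h1, h2⟩; exact ⟨⟨h1, by omega⟩, h2⟩
  have hNle : (S.filter fun v => m ≤ g v).card ≤ (S.filter fun v => m ≤ h v).card := by
    apply Finset.card_le_card
    intro v hv
    simp only [Finset.mem_filter] at *
    exact ⟨hv.1, le_trans hv.2 (hgh v hv.1)⟩
  have hsum_g := key g hgM
  have hsum_h := key h hhM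
  have hIcc : Finset.Icc m M = insert m (Finset.Icc (m+1) M) := by
    ext j
    simp only [Finset.mem_Icc, Finset.mem_insert]
    omega
  have hnotmem : m ∉ Finset.Icc (m+1) M := by simp
  have htail : ∑ j ∈ Finset.Icc (m+1) M, (S.filter fun v => g v = j).card
      = ∑ j ∈ Finset.Icc (m+1) M, (S.filter fun v => h v = j).card := by
    apply Finset.sum_congr rfl
    intro j hj
    have hj' := Finset.mem_Icc.mp hj
    exact habove j (by omega)
  rw [hsum_g, hsum_h, hIcc, Finset.sum_insert hnotmem, Finset.sum_insert hnotmem] at hNle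
  refine ⟨m, ?_, habove⟩
  have hagm : ag m = (S.filter fun v => g v = m).card := rfl
  have hahm : ah m = (S.filter fun v => h v = m).card := rfl
  omega

/-- Lemma 3 (exchange stability under disjoint additions): if the root-to-`a` path is
lexicographically no worse than the root-to-`b` path under `P`, and `X` is a set of
leaves avoiding `a`, `b` and the subtree of `d` (the child of the least common
ancestor `c` of `a` and `b` towards `a`), then `f⃗(P ∪ X ∪ {a}) ≤_L f⃗(P ∪ X ∪ {b})`. -/
theorem exchange_stable {V : Type*} [Fintype V] (T : FailTree V)
    (P : Finset V) (hP : P ⊆ T.leaves)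
    (a b : V) (ha : a ∈ T.leaves) (hb : b ∈ T.leaves) (haP : a ∉ P) (hbP : b ∉ P)
    (c : V) (hca : T.Desc a c) (hcb : T.Desc b c)
    (hlca : ∀ c' : V, T.Desc a c' → T.Desc b c' → T.Desc c c')
    (d : V) (hd : T.parent d = c) (hd' : d ≠ c) (hda : T.Desc a d)
    (X : Finset V) (hX : X ⊆ T.leaves) (haX : a ∉ X) (hbX : b ∉ X)
    (hXd : ∀ x ∈ X, ¬ T.Desc x d)
    (h : AggLe (T.faggOn (T.pathTo a) P) (T.faggOn (T.pathTo b) P)) :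
    AggLe (T.fagg (insert a (P ∪ X))) (T.fagg (insert b (P ∪ X))) := by
  classical
  set Q : Finset V := P ∪ X with hQ
  have haQ : a ∉ Q := by simp [hQ, haP, haX]
  have hbQ : b ∉ Q := by simp [hQ, hbP, hbX]
  set Pa := T.pathTo a with hPa
  set Pb := T.pathTo b with hPb
  have hmemPa : ∀ v, v ∈ Pa ↔ T.Desc a v := fun v => by
    simp [hPa, FailTree.pathTo]
  have hmemPb : ∀ v, v ∈ Pb ↔ T.Desc b v := fun v => by
    simp [hPb, FailTree.pathTo]
  set A := Pa \ Pb with hA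
  set B := Pb \ Pa with hB
  set R := Finset.univ \ (A ∪ B) with hR
  have hmemA : ∀ v, v ∈ A ↔ (T.Desc a v ∧ ¬ T.Desc b v) := fun v => by
    rw [hA, Finset.mem_sdiff, hmemPa, hmemPb]
  have hmemB : ∀ v, v ∈ B ↔ (T.Desc b v ∧ ¬ T.Desc a v) := fun v => by
    rw [hB, Finset.mem_sdiff, hmemPa, hmemPb]
  -- every member of A is a descendant of d
  have hAd : ∀ v ∈ A, T.Desc v d := by
    intro v hv
    rw [hmemA] at hv
    obtain ⟨⟨n, hn⟩, hvb⟩ := hv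
    obtain ⟨m, hm⟩ := hda
    by_cases hnm : n ≤ m
    · exact ⟨m - n, by
        rw [← hn, ← Function.iterate_add_apply, Nat.sub_add_cancel hnm, hm]⟩
    · exfalso
      apply hvb
      have hv_eq : T.parent^[n - m] d = v := by
        rw [← hm, ← Function.iterate_add_apply, show n - m + m = n by omega, hn]
      have hcv : T.Desc c v := by
        refine ⟨n - m - 1, ?_⟩
        have hstep : T.parent^[n - m - 1] (T.parent^[1] d) = v := by
          rw [← Function.iterate_add_apply, show n - m - 1 + 1 = n - m by omega, hv_eq]
        rw [← hd]
        simpa using hstep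
      exact T.desc_trans_s12 hcb hcv
  -- fnum facts
  have hfA_insa : ∀ v ∈ A, T.fnum v (insert a Q) = T.fnum v Q + 1 := by
    intro v hv
    rw [T.fnum_insert v a Q haQ, if_pos ((hmemA v).mp hv).1]
  have hfA_insb : ∀ v ∈ A, T.fnum v (insert b Q) = T.fnum v Q := by
    intro v hv
    rw [T.fnum_insert v b Q hbQ, if_neg ((hmemA v).mp hv).2]
    omega
  have hfB_insb : ∀ v ∈ B, T.fnum v (insert b Q) = T.fnum v Q + 1 := by
    intro v hv
    rw [T.fnum_insert v b Q hbQ, if_pos ((hmemB v).mp hv).1]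
  have hfB_insa : ∀ v ∈ B, T.fnum v (insert a Q) = T.fnum v Q := by
    intro v hv
    rw [T.fnum_insert v a Q haQ, if_neg ((hmemB v).mp hv).2]
    omega
  have hfR : ∀ v ∈ R, T.fnum v (insert a Q) = T.fnum v (insert b Q) := by
    intro v hv
    rw [hR, Finset.mem_sdiff, Finset.mem_union] at hv
    push_neg at hv
    obtain ⟨-, hvA, hvB⟩ := hv
    rw [hmemA] at hvA; rw [hmemB] at hvB
    push_neg at hvA hvB
    rw [T.fnum_insert v a Q haQ, T.fnum_insert v b Q hbQ]
    by_cases hav : T.Desc a v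
    · rw [if_pos hav, if_pos (hvA hav)]
    · rw [if_neg hav]
      by_cases hbv : T.Desc b v
      · exact absurd (hvB hbv) hav
      · rw [if_neg hbv]
  have hfAQ : ∀ v ∈ A, T.fnum v Q = T.fnum v P := by
    intro v hv
    unfold FailTree.fnum
    rw [hQ, Finset.filter_union]
    have hXempty : X.filter (fun p => T.Desc p v) = ∅ :=
      Finset.filter_eq_empty_iff.mpr
        (fun x hx hdx => hXd x hx (T.desc_trans_s12 hdx (hAd v hv)))
    rw [hXempty, Finset.union_empty]
  -- disjointness and partition
  have hABdisj : Disjoint A B := by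
    rw [Finset.disjoint_left]
    intro v hvA hvB
    exact ((hmemA v).mp hvA).2 ((hmemB v).mp hvB).1
  have hABR : Disjoint (A ∪ B) R := Finset.disjoint_sdiff
  have huniv : (Finset.univ : Finset V) = (A ∪ B) ∪ R := by
    rw [hR, Finset.union_sdiff_of_subset (Finset.subset_univ _)]
  have hdecomp : ∀ W : Finset V, T.fagg W
      = fun i => T.faggOn A W i + T.faggOn B W i + T.faggOn R W i := by
    intro W
    funext i
    unfold FailTree.fagg
    rw [huniv, T.faggOn_union _ _ _ hABR, T.faggOn_union _ _ _ hABdisj]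
  -- the aggregate equalities
  have eq1 : ∀ i, T.faggOn A (insert a Q) i = shiftAgg (T.faggOn A Q) i :=
    faggOn_shift T A Q (insert a Q) hfA_insa
  have eq4 : ∀ i, T.faggOn B (insert b Q) i = shiftAgg (T.faggOn B Q) i :=
    faggOn_shift T B Q (insert b Q) hfB_insb
  have eq2 : T.faggOn B (insert a Q) = T.faggOn B Q := T.faggOn_congr _ _ _ hfB_insa
  have eq3 : T.faggOn A (insert b Q) = T.faggOn A Q := T.faggOn_congr _ _ _ hfA_insb
  have eq5 : T.faggOn R (insert a Q) = T.faggOn R (insert b Q) := T.faggOn_congr _ _ _ hfR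
  have eq6 : T.faggOn A Q = T.faggOn A P := T.faggOn_congr _ _ _ hfAQ
  -- from the hypothesis, compare A and B under P
  have hsub : AggLe (T.faggOn A P) (T.faggOn B P) := by
    apply aggle_of_add_right (s := fun i => T.faggOn (Pa ∩ Pb) P i)
    have e1 : T.faggOn Pa P
        = fun i => T.faggOn A P i + T.faggOn (Pa ∩ Pb) P i := by
      funext i
      conv_lhs => rw [← Finset.sdiff_union_inter Pa Pb]
      rw [T.faggOn_union _ _ _ (Finset.disjoint_sdiff_inter _ _)]
    have e2 : T.faggOn Pb P
        = fun i => T.faggOn B P i + T.faggOn (Pa ∩ Pb) P i := by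
      funext i
      conv_lhs => rw [← Finset.sdiff_union_inter Pb Pa]
      rw [T.faggOn_union _ _ _ (Finset.disjoint_sdiff_inter _ _), Finset.inter_comm]
    rw [e1, e2] at h
    exact h
  -- monotonicity: adding X can only raise failure numbers on B
  have hmono : AggLe (T.faggOn B P) (T.faggOn B Q) := by
    have hPQ : P ⊆ Q := by rw [hQ]; exact Finset.subset_union_left
    exact aggle_filter_mono B (fun v => T.fnum v P) (fun v => T.fnum v Q)
      (fun v _ => T.fnum_mono_s12 v hPQ)
  have hchain : AggLe (T.faggOn A Q) (T.faggOn B Q) := by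
    rw [eq6]
    exact aggle_trans hsub hmono
  have hshift := aggle_shift hchain
  -- final assembly
  rw [hdecomp (insert a Q), hdecomp (insert b Q)]
  have egoal1 : (fun i => T.faggOn A (insert a Q) i + T.faggOn B (insert a Q) i
        + T.faggOn R (insert a Q) i)
      = fun i => (shiftAgg (T.faggOn A Q) i + T.faggOn B Q i)
        + T.faggOn R (insert a Q) i := by
    funext i
    rw [eq1 i, eq2]
  have egoal2 : (fun i => T.faggOn A (insert b Q) i + T.faggOn B (insert b Q) i
        + T.faggOn R (insert b Q) i)
      = fun i => (T.faggOn A Q i + shiftAgg (T.faggOn B Q) i)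
        + T.faggOn R (insert a Q) i := by
    funext i
    rw [eq4 i, eq3, eq5]
  rw [egoal1, egoal2]
  exact aggle_add_right hshift
end
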